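/- arXiv:2512.04194 — 2 statements merged into one kernel-verified Lean document; each statement's English description precedes it below -/
import Mathlib

section
/- Let Z_1,…,Z_M be i.i.d. real random variables with CDF F_Z, let δ, γ ∈ (0,1), and suppose M > log(γ)/log(1-δ). Let k* = F_B^{-1}(γ; M, δ) be the γ-quantile of the Binomial(M, δ) distribution. Then k* ∈ {1,…,M} and P{Z_{(k*)} ≤ q_δ(Z)} ≥ 1 - γ, where Z_{(k)} denotes the k-th order statistic and q_δ(Z) = inf{τ : F_Z(τ) ≥ δ} is the δ-quantile. -/
open MeasureTheory

/-- `k`-th order statistic of the sample `Z : Fin M → ℝ` (for `1 ≤ k ≤ M`):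
the smallest `q` such that at least `k` of the sample values are `≤ q`. -/
noncomputable def orderStat {M : ℕ} (Z : Fin M → ℝ) (k : ℕ) : ℝ :=
  sInf {q : ℝ | k ≤ (Finset.univ.filter fun t => Z t ≤ q).card}

/-- CDF of the Binomial(M, p) distribution evaluated at `k`. -/
noncomputable def binCDF (M : ℕ) (p : ℝ) (k : ℕ) : ℝ :=
  ∑ j ∈ Finset.range (k + 1), (M.choose j : ℝ) * p ^ j * (1 - p) ^ (M - j)

/-- `γ`-quantile of the Binomial(M, p) distribution. -/
noncomputable def binQuantile (M : ℕ) (p γ : ℝ) : ℕ :=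
  sInf {k : ℕ | γ ≤ binCDF M p k}

open Finset Set Filter Topology

lemma hasDerivAt_binCDF (M k : ℕ) (p : ℝ) :
    HasDerivAt (fun x => binCDF M x k)
      (-((M.choose k : ℝ) * p ^ k * (((M - k : ℕ) : ℝ) * (1 - p) ^ (M - k - 1)))) p := by
  set v : ℕ → ℝ := fun j => (M.choose j : ℝ) * ((j : ℝ) * p ^ (j - 1)) * (1 - p) ^ (M - j) with hv
  set w : ℕ → ℝ := fun j => (M.choose j : ℝ) * p ^ j * (((M - j : ℕ) : ℝ) * (1 - p) ^ (M - j - 1)) with hw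
  have hterm : ∀ j : ℕ, HasDerivAt
      (fun x : ℝ => (M.choose j : ℝ) * x ^ j * (1 - x) ^ (M - j)) (v j - w j) p := by
    intro j
    have h1 : HasDerivAt (fun x : ℝ => (M.choose j : ℝ) * x ^ j)
        ((M.choose j : ℝ) * ((j : ℝ) * p ^ (j - 1))) p := (hasDerivAt_pow j p).const_mul _
    have h2 : HasDerivAt (fun x : ℝ => (1 - x) ^ (M - j))
        (-(((M - j : ℕ) : ℝ) * (1 - p) ^ (M - j - 1))) p := by
      have h3 := (hasDerivAt_pow (M - j) (1 - p)).comp p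
        ((hasDerivAt_const p (1 : ℝ)).sub (hasDerivAt_id p))
      exact h3.congr_deriv (by ring)
    have := h1.mul h2
    exact this.congr_deriv (by simp only [hv, hw]; ring)
  have hsum : HasDerivAt (fun x => binCDF M x k)
      (∑ j ∈ Finset.range (k + 1), (v j - w j)) p := by
    unfold binCDF
    exact HasDerivAt.fun_sum fun j _ => hterm j
  have key : ∑ j ∈ Finset.range (k + 1), (v j - w j) = -(w k) := by
    have hvw : ∀ j : ℕ, v (j + 1) = w j := by
      intro j
      have hc : (M.choose (j + 1) * (j + 1) : ℕ) = M.choose j * (M - j) :=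
        Nat.choose_succ_right_eq M j
      have hc' : ((M.choose (j + 1) : ℝ)) * ((j + 1 : ℕ) : ℝ) = (M.choose j : ℝ) * ((M - j : ℕ) : ℝ) := by
        exact_mod_cast congrArg (Nat.cast (R := ℝ)) hc
      simp only [hv, hw]
      have he : M - (j + 1) = M - j - 1 := by omega
      rw [he]
      simp only [Nat.add_sub_cancel]
      linear_combination (p ^ j * (1 - p) ^ (M - j - 1)) * hc'
    rw [Finset.sum_sub_distrib, Finset.sum_range_succ' v, Finset.sum_range_succ w]
    have hv0 : v 0 = 0 := by simp [hv]
    simp only [hvw, hv0]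
    ring
  rw [key] at hsum
  exact hsum

lemma binCDF_antitoneOn (M k : ℕ) : AntitoneOn (fun p => binCDF M p k) (Set.Icc 0 1) := by
  have hdiff : ∀ x : ℝ, DifferentiableAt ℝ (fun p => binCDF M p k) x :=
    fun x => (hasDerivAt_binCDF M k x).differentiableAt
  refine antitoneOn_of_deriv_nonpos (convex_Icc 0 1)
    ((Differentiable.continuous hdiff).continuousOn)
    (fun x _ => (hdiff x).differentiableWithinAt) ?_
  intro x hx
  rw [interior_Icc] at hx
  rw [(hasDerivAt_binCDF M k x).deriv]
  have h1 : (0:ℝ) ≤ x ^ k := pow_nonneg hx.1.le _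
  have h2 : (0:ℝ) ≤ (1 - x) ^ (M - k - 1) := pow_nonneg (by linarith [hx.2]) _
  have h3 : (0:ℝ) ≤ (M.choose k : ℝ) := Nat.cast_nonneg _
  have h4 : (0:ℝ) ≤ ((M - k : ℕ) : ℝ) := Nat.cast_nonneg _
  have := mul_nonneg (mul_nonneg h3 h1) (mul_nonneg h4 h2)
  linarith

lemma binCDF_self (M : ℕ) (p : ℝ) : binCDF M p M = 1 := by
  have := add_pow p (1 - p) M
  simp only [add_sub_cancel, one_pow] at this
  have h2 : binCDF M p M = ∑ m ∈ Finset.range (M + 1), p ^ m * (1 - p) ^ (M - m) * (M.choose m : ℝ) :=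
    Finset.sum_congr rfl fun j _ => by ring
  rw [h2]
  exact this.symm

lemma binCDF_zero (M : ℕ) (p : ℝ) : binCDF M p 0 = (1 - p) ^ M := by
  simp [binCDF]

lemma binCDF_nonneg (M k : ℕ) {p : ℝ} (h0 : 0 ≤ p) (h1 : p ≤ 1) : 0 ≤ binCDF M p k :=
  Finset.sum_nonneg fun j _ => mul_nonneg (mul_nonneg (Nat.cast_nonneg _) (pow_nonneg h0 _)) (pow_nonneg (by linarith) _)

lemma quantile_cdf_ge (μ : Measure ℝ) [IsProbabilityMeasure μ] {δ : ℝ}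
    (hδ : δ ∈ Set.Ioo (0:ℝ) 1) :
    ENNReal.ofReal δ ≤ μ (Set.Iic (sInf {τ : ℝ | ENNReal.ofReal δ ≤ μ (Set.Iic τ)})) := by
  set T := {τ : ℝ | ENNReal.ofReal δ ≤ μ (Set.Iic τ)} with hT
  have hmono : ∀ ⦃a b : ℝ⦄, a ≤ b → μ (Iic a) ≤ μ (Iic b) :=
    fun a b hab => measure_mono (Iic_subset_Iic.2 hab)
  -- T nonempty
  have hne : T.Nonempty := by
    have h1 : Tendsto (fun x : ℝ => μ (Iic x)) atTop (𝓝 (μ univ)) := tendsto_measure_Iic_atTop μ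
    have hlt : ENNReal.ofReal δ < μ univ := by
      rw [measure_univ]
      exact ENNReal.ofReal_lt_one.2 hδ.2
    obtain ⟨x, hx⟩ := (h1.eventually_const_le hlt).exists
    exact ⟨x, hx⟩
  -- a point with small measure, giving BddBelow
  obtain ⟨x₀, hx₀⟩ : ∃ x₀ : ℝ, μ (Iic x₀) < ENNReal.ofReal δ := by
    have h2 : Tendsto (fun n : ℕ => μ (Iic (-(n:ℝ)))) atTop
        (𝓝 (μ (⋂ n : ℕ, Iic (-(n:ℝ))))) := by
      refine tendsto_measure_iInter_atTop (fun n => (measurableSet_Iic).nullMeasurableSet)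
        (fun a b hab => Iic_subset_Iic.2 (neg_le_neg (Nat.cast_le.2 hab)))
        ⟨0, measure_ne_top μ _⟩
    have hempty : (⋂ n : ℕ, Iic (-(n:ℝ))) = ∅ := by
      ext x
      simp only [Set.mem_iInter, Set.mem_Iic, Set.mem_empty_iff_false, iff_false, not_forall, not_le]
      obtain ⟨n, hn⟩ := exists_nat_gt (-x)
      exact ⟨n, by linarith⟩
    rw [hempty, measure_empty] at h2
    have hpos : (0 : ENNReal) < ENNReal.ofReal δ := ENNReal.ofReal_pos.2 hδ.1
    obtain ⟨n, hn⟩ := (h2.eventually_lt_const hpos).exists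
    exact ⟨-(n:ℝ), hn⟩
  have hbdd : BddBelow T := by
    refine ⟨x₀, fun τ hτ => ?_⟩
    by_contra hc
    push_neg at hc
    exact absurd hτ (not_le.2 (lt_of_le_of_lt (hmono hc.le) hx₀))
  set q := sInf T with hq
  -- right continuity
  have hseq : Tendsto (fun n : ℕ => μ (Iic (q + 1 / (n + 1)))) atTop (𝓝 (μ (⋂ n : ℕ, Iic (q + 1 / (n + 1))))) := by
    refine tendsto_measure_iInter_atTop (fun n => (measurableSet_Iic).nullMeasurableSet)
      (fun a b hab => Iic_subset_Iic.2 (by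
        have : (1 : ℝ) / (b + 1) ≤ 1 / (a + 1) := by
          apply one_div_le_one_div_of_le <;> [positivity; exact_mod_cast (by exact_mod_cast add_le_add_left (Nat.cast_le.2 hab) 1)]
        linarith)) ⟨0, measure_ne_top μ _⟩
  have hiInter : (⋂ n : ℕ, Iic (q + 1 / ((n:ℝ) + 1))) = Iic q := by
    ext x
    simp only [Set.mem_iInter, Set.mem_Iic]
    constructor
    · intro h
      by_contra hc
      push_neg at hc
      obtain ⟨n, hn⟩ := exists_nat_one_div_lt (show (0:ℝ) < x - q by linarith)
      have := h n
      linarith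
    · intro h n
      have : (0:ℝ) < 1 / ((n:ℝ) + 1) := by positivity
      linarith
  rw [hiInter] at hseq
  refine ge_of_tendsto hseq (Filter.Eventually.of_forall fun n => ?_)
  have hlt : q < q + 1 / ((n:ℝ) + 1) := by
    have : (0:ℝ) < 1 / ((n:ℝ) + 1) := by positivity
    linarith
  obtain ⟨τ, hτT, hτlt⟩ := (csInf_lt_iff hbdd hne).1 hlt
  exact le_trans hτT (hmono hτlt.le)

lemma binom_count {Ω : Type*} [MeasurableSpace Ω] (P : Measure Ω) [IsProbabilityMeasure P]
    {M : ℕ} (Z : Fin M → Ω → ℝ) (hmeas : ∀ t, Measurable (Z t))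
    (hindep : ProbabilityTheory.iIndepFun Z P)
    (q : ℝ) (pe : ENNReal) (hpt : ∀ t, P (Z t ⁻¹' Set.Iic q) = pe) (n : ℕ) :
    P {ω | (Finset.univ.filter fun t => Z t ω ≤ q).card ≤ n}
      = ∑ j ∈ Finset.range (n + 1), (M.choose j : ENNReal) * pe ^ j * (1 - pe) ^ (M - j) := by
  classical
  set s : Fin M → Set Ω := fun t => Z t ⁻¹' Set.Iic q with hs
  have hsm : ∀ t, MeasurableSet (s t) := fun t => (hmeas t) measurableSet_Iic
  set E : Finset (Fin M) → Set Ω := fun A => ⋂ t, (if t ∈ A then s t else (s t)ᶜ) with hE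
  have hEm : ∀ A, MeasurableSet (E A) := by
    intro A
    refine MeasurableSet.iInter fun t => ?_
    by_cases h : t ∈ A <;> simp [h, hsm t, (hsm t).compl]
  have hmemE : ∀ (ω : Ω) (A : Finset (Fin M)),
      ω ∈ E A ↔ (Finset.univ.filter fun t => Z t ω ≤ q) = A := by
    intro ω A
    simp only [hE, Set.mem_iInter]
    constructor
    · intro h
      ext t
      have := h t
      by_cases ht : t ∈ A
      · simpa [ht, hs] using (by simpa [ht] using this : ω ∈ s t)
      · simp only [ht, if_neg, Set.mem_compl_iff] at this
        simp only [Finset.mem_filter, Finset.mem_univ, true_and, ht, iff_false]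
        exact fun hc => this (by exact hc)
    · intro h t
      by_cases ht : t ∈ A
      · have : Z t ω ≤ q := by
          have := h ▸ ht
          simpa using (Finset.mem_filter.1 this).2
        simp [ht, hs, this]
      · have : ¬ Z t ω ≤ q := by
          intro hc
          exact ht (h ▸ (Finset.mem_filter.2 ⟨Finset.mem_univ t, hc⟩))
        simp [ht, hs, this]
  -- probability of E A
  have hPE : ∀ A : Finset (Fin M), P (E A) = pe ^ A.card * (1 - pe) ^ (M - A.card) := by
    intro A
    have hms : ∀ t : Fin M, MeasurableSet[(inferInstance : MeasurableSpace ℝ).comap (Z t)]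
        (if t ∈ A then s t else (s t)ᶜ) := by
      intro t
      by_cases ht : t ∈ A
      · simp only [ht, if_true]
        exact ⟨Set.Iic q, measurableSet_Iic, rfl⟩
      · simp only [ht, if_false]
        exact ⟨(Set.Iic q)ᶜ, measurableSet_Iic.compl, rfl⟩
    have key := hindep.meas_iInter hms
    rw [hE]
    rw [key]
    have hval : ∀ t : Fin M, P (if t ∈ A then s t else (s t)ᶜ) = if t ∈ A then pe else 1 - pe := by
      intro t
      by_cases ht : t ∈ A
      · simpa [ht] using hpt t
      · simp only [ht, if_neg, if_false]
        rw [measure_compl (hsm t) (measure_ne_top P _), measure_univ, hpt t]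
    calc ∏ t : Fin M, P (if t ∈ A then s t else (s t)ᶜ)
        = ∏ t : Fin M, (if t ∈ A then pe else 1 - pe) := Finset.prod_congr rfl fun t _ => hval t
      _ = pe ^ A.card * (1 - pe) ^ (M - A.card) := by
          rw [← Finset.prod_sdiff (Finset.subset_univ A)]
          have h1 : ∏ t ∈ A, (if t ∈ A then pe else 1 - pe) = pe ^ A.card := by
            rw [Finset.prod_congr rfl (fun t ht => if_pos ht), Finset.prod_const]
          have h2 : ∏ t ∈ Finset.univ \ A, (if t ∈ A then pe else 1 - pe)
              = (1 - pe) ^ (M - A.card) := by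
            rw [Finset.prod_congr rfl (fun t ht => if_neg (Finset.mem_sdiff.1 ht).2),
              Finset.prod_const, Finset.card_sdiff_of_subset (Finset.subset_univ A), Finset.card_univ,
              Fintype.card_fin]
          rw [h1, h2, mul_comm]
  -- decompose the event
  have hset : {ω | (Finset.univ.filter fun t => Z t ω ≤ q).card ≤ n}
      = ⋃ A ∈ Finset.univ.powerset.filter (fun A : Finset (Fin M) => A.card ≤ n), E A := by
    ext ω
    simp only [Set.mem_setOf_eq, Set.mem_iUnion, Finset.mem_filter, Finset.mem_powerset]
    constructor
    · intro h
      exact ⟨Finset.univ.filter fun t => Z t ω ≤ q, ⟨Finset.filter_subset _ _ |>.trans (le_refl _), h⟩, (hmemE ω _).2 rfl⟩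
    · rintro ⟨A, ⟨_, hA⟩, hωA⟩
      rw [(hmemE ω A).1 hωA]
      exact hA
  rw [hset]
  rw [measure_biUnion_finset ?hd (fun A _ => hEm A)]
  case hd =>
    intro A hA B hB hAB
    refine Set.disjoint_left.2 fun ω hωA hωB => hAB ?_
    rw [← (hmemE ω A).1 hωA, ← (hmemE ω B).1 hωB]
  -- group by cardinality
  calc ∑ A ∈ Finset.univ.powerset.filter (fun A : Finset (Fin M) => A.card ≤ n), P (E A)
      = ∑ A ∈ Finset.univ.powerset.filter (fun A : Finset (Fin M) => A.card ∈ Finset.range (n+1)),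
          (fun j => pe ^ j * (1 - pe) ^ (M - j)) A.card := by
        refine Finset.sum_congr (by ext A; simp [Nat.lt_succ_iff]) fun A hA => hPE A
    _ = ∑ j ∈ Finset.range (n + 1), ∑ A ∈ Finset.univ.powerset.filter (fun A : Finset (Fin M) => A.card = j),
          (fun j => pe ^ j * (1 - pe) ^ (M - j)) j := by
        rw [Finset.sum_fiberwise_eq_sum_filter' _ _ (fun A : Finset (Fin M) => A.card)]
    _ = ∑ j ∈ Finset.range (n + 1), (M.choose j : ENNReal) * pe ^ j * (1 - pe) ^ (M - j) := by
        refine Finset.sum_congr rfl fun j _ => ?_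
        rw [← Finset.powersetCard_eq_filter, Finset.sum_const, Finset.card_powersetCard,
          Finset.card_univ, Fintype.card_fin]
        simp [mul_assoc]

theorem stmt7 {Ω : Type*} [MeasurableSpace Ω] (P : Measure Ω) [IsProbabilityMeasure P]
    {M : ℕ} (Z : Fin M → Ω → ℝ) (hmeas : ∀ t, Measurable (Z t))
    (μ : Measure ℝ) [IsProbabilityMeasure μ]
    (hid : ∀ t, Measure.map (Z t) P = μ)
    (hindep : ProbabilityTheory.iIndepFun Z P)
    (δ γ : ℝ) (hδ : δ ∈ Set.Ioo (0:ℝ) 1) (hγ : γ ∈ Set.Ioo (0:ℝ) 1)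
    (hM : (M : ℝ) > Real.log γ / Real.log (1 - δ)) :
    1 ≤ binQuantile M δ γ ∧ binQuantile M δ γ ≤ M ∧
    ENNReal.ofReal (1 - γ) ≤
      P {ω | orderStat (fun t => Z t ω) (binQuantile M δ γ)
          ≤ sInf {τ : ℝ | ENNReal.ofReal δ ≤ μ (Set.Iic τ)}} := by
  obtain ⟨hδ0, hδ1⟩ := hδ
  obtain ⟨hγ0, hγ1⟩ := hγ
  have h1δ : (0:ℝ) < 1 - δ := by linarith
  set S : Set ℕ := {k : ℕ | γ ≤ binCDF M δ k} with hS
  set k := binQuantile M δ γ with hk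
  have hkS : k = sInf S := rfl
  -- M ∈ S
  have hMS : M ∈ S := by
    simp only [hS, Set.mem_setOf_eq, binCDF_self]
    linarith
  have hkM : k ≤ M := by rw [hkS]; exact Nat.sInf_le hMS
  -- 0 ∉ S
  have h0S : (0:ℕ) ∉ S := by
    simp only [hS, Set.mem_setOf_eq, binCDF_zero, not_le]
    have hlog : Real.log (1 - δ) < 0 := Real.log_neg h1δ (by linarith)
    have hml : (M:ℝ) * Real.log (1 - δ) < Real.log γ := (div_lt_iff_of_neg hlog).1 hM
    have : Real.log ((1 - δ) ^ M) < Real.log γ := by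
      rw [Real.log_pow]; exact_mod_cast hml
    exact (Real.log_lt_log_iff (pow_pos h1δ M) hγ0).1 this
  have hk1 : 1 ≤ k := by
    rcases Nat.eq_zero_or_pos k with h | h
    · exfalso
      rcases Nat.sInf_eq_zero.1 (by rw [← hkS]; exact h) with h' | h'
      · exact h0S h'
      · exact absurd hMS (h' ▸ Set.notMem_empty M)
    · exact h
  refine ⟨hk1, hkM, ?_⟩
  have hkpred : binCDF M δ (k - 1) < γ := by
    have : (k - 1 : ℕ) ∉ S := Nat.notMem_of_lt_sInf (by rw [← hkS]; omega)
    simpa [hS, not_le] using this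
  -- the quantile
  set q := sInf {τ : ℝ | ENNReal.ofReal δ ≤ μ (Set.Iic τ)} with hq
  set pe := μ (Set.Iic q) with hpe
  have hpe1 : pe ≤ 1 := prob_le_one
  have hpet : pe ≠ ⊤ := (lt_of_le_of_lt hpe1 ENNReal.one_lt_top).ne
  have hδpe : ENNReal.ofReal δ ≤ pe := quantile_cdf_ge μ ⟨hδ0, hδ1⟩
  set p := pe.toReal with hp
  have hpe_eq : pe = ENNReal.ofReal p := (ENNReal.ofReal_toReal hpet).symm
  have hp0 : 0 ≤ p := ENNReal.toReal_nonneg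
  have hp1 : p ≤ 1 := by
    have := ENNReal.toReal_mono (by simp) hpe1
    simpa using this
  have hδp : δ ≤ p := by
    rw [hpe_eq] at hδpe
    exact (ENNReal.ofReal_le_ofReal_iff hp0).1 hδpe
  have hpt : ∀ t, P (Z t ⁻¹' Set.Iic q) = pe := by
    intro t
    rw [hpe, ← hid t, Measure.map_apply (hmeas t) measurableSet_Iic]
  -- bad event
  set B := {ω : Ω | (Finset.univ.filter fun t => Z t ω ≤ q).card ≤ k - 1} with hB
  have hPB : P B = ENNReal.ofReal (binCDF M p (k - 1)) := by
    rw [binom_count P Z hmeas hindep q pe hpt (k - 1)]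
    unfold binCDF
    rw [ENNReal.ofReal_sum_of_nonneg (fun j _ => by
      have : (0:ℝ) ≤ (1 - p) ^ (M - j) := pow_nonneg (by linarith) _
      positivity)]
    refine Finset.sum_congr rfl fun j _ => ?_
    rw [ENNReal.ofReal_mul (by positivity), ENNReal.ofReal_mul (by positivity),
      ENNReal.ofReal_natCast, ENNReal.ofReal_pow hp0, ENNReal.ofReal_pow (by linarith),
      ← hpe_eq]
    congr 1
    congr 1
    rw [ENNReal.ofReal_sub _ hp0, ENNReal.ofReal_one, ← hpe_eq]
  -- inclusion of events
  have hincl : Bᶜ ⊆ {ω | orderStat (fun t => Z t ω) k ≤ q} := by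
    intro ω hω
    simp only [hB, Set.mem_compl_iff, Set.mem_setOf_eq, not_le] at hω
    have hcard : k ≤ (Finset.univ.filter fun t => Z t ω ≤ q).card := by omega
    simp only [Set.mem_setOf_eq]
    have hMpos : 0 < M := lt_of_lt_of_le hk1 hkM
    have : Nonempty (Fin M) := ⟨⟨0, hMpos⟩⟩
    refine csInf_le ?_ hcard
    refine ⟨(Finset.univ.image fun t => Z t ω).min' (Finset.univ_nonempty.image _), ?_⟩
    intro q' hq'
    simp only [Set.mem_setOf_eq] at hq'
    have hpos : 0 < (Finset.univ.filter fun t => Z t ω ≤ q').card := lt_of_lt_of_le hk1 hq'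
    obtain ⟨t, ht⟩ := Finset.card_pos.1 hpos
    have htq : Z t ω ≤ q' := (Finset.mem_filter.1 ht).2
    exact le_trans (Finset.min'_le _ _ (Finset.mem_image_of_mem _ (Finset.mem_univ t))) htq
  -- compare binCDF values
  have hcγ : binCDF M p (k - 1) ≤ γ :=
    le_of_lt (lt_of_le_of_lt
      (binCDF_antitoneOn M (k - 1) ⟨le_of_lt hδ0, le_of_lt hδ1⟩ ⟨by linarith, hp1⟩ hδp) hkpred)
  have hc0 : 0 ≤ binCDF M p (k - 1) := binCDF_nonneg M (k - 1) hp0 hp1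
  -- final chain
  calc ENNReal.ofReal (1 - γ) ≤ 1 - ENNReal.ofReal (binCDF M p (k - 1)) := by
        refine ENNReal.le_sub_of_add_le_right ENNReal.ofReal_ne_top ?_
        rw [← ENNReal.ofReal_add (by linarith) hc0, ← ENNReal.ofReal_one]
        exact ENNReal.ofReal_le_ofReal (by linarith)
    _ ≤ P Bᶜ := by
        rw [← hPB]
        refine tsub_le_iff_right.2 ?_
        rw [← measure_univ (μ := P), ← Set.compl_union_self B]
        exact measure_union_le _ _
    _ ≤ P {ω | orderStat (fun t => Z t ω) k ≤ q} := measure_mono hincl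
end

section
/- Consider a Markov chain x_{k+1} = F(x_k, κ(x_k), ξ_k) with i.i.d. disturbances (ξ_k), and suppose the one-step safe-stay condition P_ξ{F(x, κ(x), ξ) ∈ S} ≥ 1-δ holds for all x ∈ S, where the control law κ depends measurably on a dataset D ∼ P_ξ^M. Suppose there is an event E on the data space with P_ξ^M(E) ≥ 1 - γ̃ such that for D ∈ E the one-step condition holds for all x ∈ S simultaneously. Then P_ξ^M{ P_N(x_0; κ_D) ≤ ε } ≥ 1 - γ̃ for all x_0 ∈ S, where P_N is the N-step exit probability and δ ≤ 1 - (1-ε)^{1/N}. -/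
open MeasureTheory

/-- Closed-loop trajectory of `x_{k+1} = F (x_k, κ(x_k), ξ_k)` driven by the
disturbance realization `ω : Fin N → Ξ`, started at `x0`. -/
def traj {V U Ξ : Type*} (N : ℕ) (F : V → U → Ξ → V) (κ : V → U)
    (x0 : V) (ω : Fin N → Ξ) : ℕ → V
  | 0 => x0
  | k + 1 =>
    if hk : k < N then
      F (traj N F κ x0 ω k) (κ (traj N F κ x0 ω k)) (ω ⟨k, hk⟩)
    else traj N F κ x0 ω k

section aux

variable {V U Ξ : Type*} [MeasurableSpace V] [MeasurableSpace Ξ]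

/-- Variable-length trajectory. -/
def traj' (F : V → U → Ξ → V) (κ : V → U) (x0 : V) : (n : ℕ) → (Fin n → Ξ) → V
  | 0, _ => x0
  | n + 1, ω =>
      F (traj' F κ x0 n (Fin.init ω)) (κ (traj' F κ x0 n (Fin.init ω))) (ω (Fin.last n))

lemma measurable_traj' {F : V → U → Ξ → V} {κ : V → U}
    (hcl : Measurable (fun q : V × Ξ => F q.1 (κ q.1) q.2)) (x0 : V) :
    ∀ n, Measurable (traj' F κ x0 n)
  | 0 => measurable_const
  | n + 1 => by
      have h1 : Measurable fun ω : Fin (n + 1) → Ξ => traj' F κ x0 n (Fin.init ω) :=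
        (measurable_traj' hcl x0 n).comp
          (measurable_pi_lambda _ fun i => measurable_pi_apply _)
      exact hcl.comp (h1.prodMk (measurable_pi_apply (Fin.last n)))

/-- Staying in `S` for all prefixes. -/
def stays (F : V → U → Ξ → V) (κ : V → U) (x0 : V) (S : Set V) (n : ℕ)
    (ω : Fin n → Ξ) : Prop :=
  ∀ k (hk : k ≤ n), traj' F κ x0 k (fun i => ω (Fin.castLE hk i)) ∈ S

lemma restrict_self {n : ℕ} (ω : Fin n → Ξ) :
    (fun i => ω (Fin.castLE le_rfl i)) = ω := by
  funext i; exact congrArg ω (Fin.ext rfl)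

lemma restrict_init {n k : ℕ} (ω : Fin (n + 1) → Ξ) (hk : k ≤ n) :
    (fun i => Fin.init ω (Fin.castLE hk i)) =
      fun i => ω (Fin.castLE (hk.trans (Nat.le_succ n)) i) := by
  funext i; exact congrArg ω (Fin.ext rfl)

lemma stays_succ_iff {F : V → U → Ξ → V} {κ : V → U} {x0 : V} {S : Set V} {n : ℕ}
    (ω : Fin (n + 1) → Ξ) :
    stays F κ x0 S (n + 1) ω ↔
      stays F κ x0 S n (Fin.init ω) ∧ traj' F κ x0 (n + 1) ω ∈ S := by
  constructor
  · intro h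
    refine ⟨fun k hk => ?_, ?_⟩
    · rw [restrict_init ω hk]; exact h k (hk.trans (Nat.le_succ n))
    · have := h (n + 1) le_rfl
      rwa [restrict_self] at this
  · rintro ⟨h1, h2⟩ k hk
    rcases Nat.lt_or_ge k (n + 1) with hlt | hge
    · have hk' : k ≤ n := Nat.lt_succ_iff.mp hlt
      have := h1 k hk'
      rwa [restrict_init ω hk'] at this
    · have hkeq : k = n + 1 := le_antisymm hk hge
      subst hkeq
      rwa [restrict_self]

lemma measurableSet_stays {F : V → U → Ξ → V} {κ : V → U}
    (hcl : Measurable (fun q : V × Ξ => F q.1 (κ q.1) q.2)) (x0 : V) {S : Set V}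
    (hS : MeasurableSet S) (n : ℕ) :
    MeasurableSet {ω : Fin n → Ξ | stays F κ x0 S n ω} := by
  have : {ω : Fin n → Ξ | stays F κ x0 S n ω} =
      ⋂ (k : ℕ) (hk : k ≤ n),
        (fun ω : Fin n → Ξ => traj' F κ x0 k (fun i => ω (Fin.castLE hk i))) ⁻¹' S := by
    ext ω; simp [stays]
  rw [this]
  refine MeasurableSet.iInter fun k => MeasurableSet.iInter fun hk => ?_
  exact ((measurable_traj' hcl x0 k).comp
    (measurable_pi_lambda _ fun i => measurable_pi_apply _)) hS

lemma stays_measure_ge (μ : Measure Ξ) [IsProbabilityMeasure μ]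
    {F : V → U → Ξ → V} {κ : V → U} {x0 : V} {S : Set V}
    (hcl : Measurable (fun q : V × Ξ => F q.1 (κ q.1) q.2))
    (hS : MeasurableSet S) (hx0 : x0 ∈ S) {δ : ℝ}
    (hstep : ∀ x ∈ S, ENNReal.ofReal (1 - δ) ≤ μ {v | F x (κ x) v ∈ S}) :
    ∀ n, (ENNReal.ofReal (1 - δ)) ^ n ≤
      (Measure.pi fun _ : Fin n => μ) {ω | stays F κ x0 S n ω} := by
  intro n
  induction n with
  | zero =>
      have : {ω : Fin 0 → Ξ | stays F κ x0 S 0 ω} = Set.univ := by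
        ext ω
        simp only [Set.mem_setOf_eq, Set.mem_univ, iff_true]
        intro k hk
        interval_cases k
        exact hx0
      rw [this]
      simp
  | succ n ih =>
      set e := MeasurableEquiv.piFinSuccAbove (fun _ : Fin (n + 1) => Ξ) (Fin.last n)
      have hmp := measurePreserving_piFinSuccAbove (fun _ : Fin (n + 1) => μ) (Fin.last n)
      set B : Set (Ξ × (Fin n → Ξ)) :=
        {p | stays F κ x0 S n p.2 ∧
          F (traj' F κ x0 n p.2) (κ (traj' F κ x0 n p.2)) p.1 ∈ S} with hBdef
      have hBmeas : MeasurableSet B := by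
        refine MeasurableSet.inter ?_ ?_
        · exact measurable_snd (measurableSet_stays hcl x0 hS n)
        · exact (hcl.comp
            (((measurable_traj' hcl x0 n).comp measurable_snd).prodMk measurable_fst)) hS
      have hpre : {ω : Fin (n + 1) → Ξ | stays F κ x0 S (n + 1) ω} = e ⁻¹' B := by
        ext ω
        have he : e ω = (ω (Fin.last n), Fin.init ω) := by
          simp only [e, MeasurableEquiv.piFinSuccAbove]
          refine Prod.ext rfl ?_
          funext i
          exact congrArg ω (Fin.ext (by simp [Fin.succAbove_last]))
        simp only [Set.mem_setOf_eq, Set.mem_preimage, he, hBdef, stays_succ_iff]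
        rfl
      have hmeasured : (Measure.pi fun _ : Fin (n + 1) => μ)
          {ω | stays F κ x0 S (n + 1) ω} =
          (μ.prod (Measure.pi fun _ : Fin n => μ)) B := by
        rw [hpre]
        exact hmp.measure_preimage hBmeas.nullMeasurableSet
      rw [hmeasured]
      rw [Measure.prod_apply_symm hBmeas]
      have hub : ∀ ω ∈ {ω : Fin n → Ξ | stays F κ x0 S n ω},
          ENNReal.ofReal (1 - δ) ≤ μ ((fun v => (v, ω)) ⁻¹' B) := by
        intro ω hω
        have hx : traj' F κ x0 n ω ∈ S := by
          have := hω n le_rfl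
          rwa [restrict_self] at this
        have : (fun v => (v, ω)) ⁻¹' B =
            {v | F (traj' F κ x0 n ω) (κ (traj' F κ x0 n ω)) v ∈ S} := by
          ext v; simp only [hBdef, Set.mem_preimage, Set.mem_setOf_eq]
          exact and_iff_right hω
        rw [this]
        exact hstep _ hx
      calc ENNReal.ofReal (1 - δ) ^ (n + 1)
          = ENNReal.ofReal (1 - δ) ^ n * ENNReal.ofReal (1 - δ) := by ring
        _ ≤ (Measure.pi fun _ : Fin n => μ) {ω | stays F κ x0 S n ω} *
              ENNReal.ofReal (1 - δ) := by
            exact mul_le_mul_left ih _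
        _ = ∫⁻ ω in {ω : Fin n → Ξ | stays F κ x0 S n ω},
              ENNReal.ofReal (1 - δ) ∂(Measure.pi fun _ : Fin n => μ) := by
            rw [setLIntegral_const]; ring
        _ ≤ ∫⁻ ω in {ω : Fin n → Ξ | stays F κ x0 S n ω},
              μ ((fun v => (v, ω)) ⁻¹' B) ∂(Measure.pi fun _ : Fin n => μ) :=
            setLIntegral_mono_ae (Measurable.aemeasurable
              (measurable_measure_prodMk_right hBmeas))
              (Filter.Eventually.of_forall hub)
        _ ≤ ∫⁻ ω, μ ((fun v => (v, ω)) ⁻¹' B) ∂(Measure.pi fun _ : Fin n => μ) :=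
            setLIntegral_le_lintegral _ _

lemma traj_eq_traj' {F : V → U → Ξ → V} {κ : V → U} {x0 : V} {N : ℕ}
    (ω : Fin N → Ξ) :
    ∀ k (hk : k ≤ N), traj N F κ x0 ω k = traj' F κ x0 k (fun i => ω (Fin.castLE hk i)) := by
  intro k
  induction k with
  | zero => intro hk; rfl
  | succ k ih =>
      intro hk
      have hk' : k < N := hk
      have hkN : k ≤ N := hk'.le
      show (if h : k < N then
          F (traj N F κ x0 ω k) (κ (traj N F κ x0 ω k)) (ω ⟨k, h⟩)
        else traj N F κ x0 ω k) = _
      rw [dif_pos hk', ih hkN]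
      show _ = F (traj' F κ x0 k (Fin.init fun i => ω (Fin.castLE hk i)))
          (κ (traj' F κ x0 k (Fin.init fun i => ω (Fin.castLE hk i))))
          ((fun i => ω (Fin.castLE hk i)) (Fin.last k))
      have h1 : (Fin.init fun i => ω (Fin.castLE hk i)) =
          fun i => ω (Fin.castLE hkN i) := by
        funext i; exact congrArg ω (Fin.ext rfl)
      have h2 : (fun i => ω (Fin.castLE hk i)) (Fin.last k) = ω ⟨k, hk'⟩ :=
        congrArg ω (Fin.ext rfl)
      rw [h1, h2]

end aux

theorem stmt14 {V U Ξ : Type*} [MeasurableSpace V] [MeasurableSpace Ξ]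
    (μ : Measure Ξ) [IsProbabilityMeasure μ]
    (N M : ℕ) (hN : 0 < N)
    (ε δ γ' : ℝ) (hε : ε ∈ Set.Ioo (0:ℝ) 1) (hδ : δ ∈ Set.Ioo (0:ℝ) 1)
    (hγ' : γ' ∈ Set.Ioo (0:ℝ) 1)
    (hδε : δ ≤ 1 - (1 - ε) ^ ((N : ℝ)⁻¹))
    (F : V → U → Ξ → V) (κ : (Fin M → Ξ) → V → U)
    (hcl : ∀ d : Fin M → Ξ, Measurable (fun q : V × Ξ => F q.1 (κ d q.1) q.2))
    (S : Set V) (hS : MeasurableSet S)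
    (E : Set (Fin M → Ξ))
    (hE : ENNReal.ofReal (1 - γ') ≤ (Measure.pi fun _ : Fin M => μ) E)
    (hstep : ∀ d ∈ E, ∀ x ∈ S,
      ENNReal.ofReal (1 - δ) ≤ μ {v | F x (κ d x) v ∈ S}) :
    ∀ x0 ∈ S,
      ENNReal.ofReal (1 - γ') ≤
        (Measure.pi fun _ : Fin M => μ)
          {d | (Measure.pi fun _ : Fin N => μ)
              {ω | ∃ k ∈ Finset.Icc 1 N, traj N F (κ d) x0 ω k ∉ S}
            ≤ ENNReal.ofReal ε} := by
  intro x0 hx0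
  have hεreal : 1 - ε ≤ (1 - δ) ^ N := by
    have h1 : (1 - ε) ^ ((N : ℝ)⁻¹) ≤ 1 - δ := by linarith
    have h0 : (0:ℝ) ≤ (1 - ε) ^ ((N : ℝ)⁻¹) :=
      Real.rpow_nonneg (by linarith [hε.2]) _
    calc (1 - ε) = ((1 - ε) ^ ((N : ℝ)⁻¹)) ^ N :=
          (Real.rpow_inv_natCast_pow (by linarith [hε.2]) hN.ne').symm
      _ ≤ (1 - δ) ^ N := pow_le_pow_left₀ h0 h1 N
  refine le_trans hE (measure_mono ?_)
  intro d hd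
  simp only [Set.mem_setOf_eq]
  -- For this d, the stay set has large measure.
  have hkey := stays_measure_ge μ (hcl d) hS hx0 (hstep d hd) N
  have hstayM := measurableSet_stays (hcl d) x0 hS (S := S) N
  have hsub : {ω : Fin N → Ξ | ∃ k ∈ Finset.Icc 1 N, traj N F (κ d) x0 ω k ∉ S} ⊆
      {ω : Fin N → Ξ | stays F (κ d) x0 S N ω}ᶜ := by
    intro ω hω hstay
    obtain ⟨k, hk, hnot⟩ := hω
    simp only [Finset.mem_Icc] at hk
    exact hnot (by rw [traj_eq_traj' ω k hk.2]; exact hstay k hk.2)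
  refine le_trans (measure_mono hsub) ?_
  rw [measure_compl hstayM (measure_ne_top _ _)]
  have hμstay : ENNReal.ofReal (1 - ε) ≤
      (Measure.pi fun _ : Fin N => μ) {ω | stays F (κ d) x0 S N ω} := by
    refine le_trans ?_ hkey
    rw [← ENNReal.ofReal_pow (by linarith [hδ.2])]
    exact ENNReal.ofReal_le_ofReal hεreal
  have hone : (Measure.pi fun _ : Fin N => μ) Set.univ = 1 := measure_univ
  calc (Measure.pi fun _ : Fin N => μ) Set.univ -
        (Measure.pi fun _ : Fin N => μ) {ω | stays F (κ d) x0 S N ω}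
      ≤ 1 - ENNReal.ofReal (1 - ε) := by
        rw [hone]; exact tsub_le_tsub_left hμstay 1
    _ = ENNReal.ofReal ε := by
        rw [← ENNReal.ofReal_one, ← ENNReal.ofReal_sub _ (by linarith [hε.2])]
        norm_num
end
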